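/- There is a directed tile set of exactly 4 tile types, using only 2 colors, implementing the half-adder (each tile with west input glue A ∈ {0,1}, south input glue B ∈ {0,1}, north output glue A XOR B, east output glue A AND B, and color A XOR B), such that for all w, h ≥ 1 there is an L-shaped seed (with all south seed glues 0 and all west seed glues 1) for which the resulting directed RTAS uniquely self-assembles the w×h binary counter pattern, namely the 2-colored rectangular pattern P : [w]×[h] → {0,1} with P(x,y) equal to the x-th least-significant binary digit of (y+1) mod 2^w. -/

import Mathlib

/-!  Rectilinear tile assembly systems (RTAS), following the paper's definitions.
A tile type is a tuple of four glues (north, west, south, east) and a colour;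
glues and colours are natural numbers.  An assembly is a partial function from
`ℤ²` to tile types (modelled with `Option`). -/

structure Tile where
  north : ℕ
  west : ℕ
  south : ℕ
  east : ℕ
  color : ℕ
deriving DecidableEq, Repr

/-- An assembly: a partial function from positions to tile types. -/
abbrev Assembly := ℤ × ℤ → Option Tile

/-- A tile set is directed if no two distinct tile types have both equal west
glues and equal south glues. -/
def DirectedTS (T : Finset Tile) : Prop :=
  ∀ t₁ ∈ T, ∀ t₂ ∈ T, t₁.west = t₂.west → t₁.south = t₂.south → t₁ = t₂

/-- `t` may attach to `α` at `(x, y)`: the position is untiled, the positions to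
the west and to the south are tiled, and the west/south glues of `t` match the
east glue of the western neighbour and the north glue of the southern one. -/
def CanAttach (T : Finset Tile) (α : Assembly) (t : Tile) (x y : ℤ) : Prop :=
  t ∈ T ∧ α (x, y) = none ∧
    (∃ tw, α (x - 1, y) = some tw ∧ t.west = tw.east) ∧
    (∃ ts, α (x, y - 1) = some ts ∧ t.south = ts.north)

/-- The assembly obtained from `α` by placing `t` at `(x, y)`. -/
def Attach (α : Assembly) (t : Tile) (x y : ℤ) : Assembly :=
  fun p => if p = (x, y) then some t else α p

/-- One attachment step `α →₁ β`. -/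
def Step (T : Finset Tile) (α β : Assembly) : Prop :=
  ∃ t x y, CanAttach T α t x y ∧ β = Attach α t x y

/-- A rectilinear tile assembly system: a finite tile set together with an
L-shaped seed of width `w` and height `h`, whose tiles do not belong to the
tile set. -/
structure RTAS where
  T : Finset Tile
  w : ℕ
  h : ℕ
  seed : Assembly
  seed_dom : ∀ p : ℤ × ℤ, (seed p).isSome ↔
      (p = (-1, -1) ∨ (0 ≤ p.1 ∧ p.1 < (w : ℤ) ∧ p.2 = -1) ∨
        (p.1 = -1 ∧ 0 ≤ p.2 ∧ p.2 < (h : ℤ)))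
  seed_disjoint : ∀ p t, seed p = some t → t ∉ T

/-- The set of producible assemblies: the least set containing the seed and
closed under single attachments. -/
inductive Producible (S : RTAS) : Assembly → Prop
  | seed : Producible S S.seed
  | step {α β : Assembly} : Producible S α → Step S.T α β → Producible S β

/-- A terminal assembly: producible, and no tile of the tile set can attach. -/
def Terminal (S : RTAS) (γ : Assembly) : Prop :=
  Producible S γ ∧ ∀ β : Assembly, ¬ Step S.T γ β

/-- `S` uniquely self-assembles the `W × H` rectangular colour pattern `pat`:
some terminal assembly of `S` covers exactly `[W] × [H]` on `ℕ²`, and the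
colour of the tile at each of those positions is the colour prescribed by
`pat`.  (For a directed RTAS the terminal assembly is unique.) -/
def UniquelySelfAssembles (S : RTAS) (W H : ℕ) (pat : ℕ → ℕ → ℕ) : Prop :=
  ∃ γ : Assembly, Terminal S γ ∧
    (∀ x y : ℕ, (γ ((x : ℤ), (y : ℤ))).isSome ↔ (x < W ∧ y < H)) ∧
    (∀ x y : ℕ, ∀ t : Tile, γ ((x : ℤ), (y : ℤ)) = some t → t.color = pat x y)

/-- Glue encoding of a bit. -/
def boolGlue (b : Bool) : ℕ := cond b 1 0

/-- The half-adder tile with west input `A` and south input `B`: the north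
output is `A XOR B`, the east output (carry) is `A AND B`, and the colour is
`A XOR B`. -/
def halfAdderTile (A B : Bool) : Tile :=
  { north := boolGlue (xor A B), west := boolGlue A, south := boolGlue B,
    east := boolGlue (A && B), color := boolGlue (xor A B) }

/-- The four half-adder tile types. -/
def halfAdderSet : Finset Tile :=
  {halfAdderTile false false, halfAdderTile false true,
   halfAdderTile true false, halfAdderTile true true}

/-! ### Auxiliary material for the proof -/

lemma my_decide_and (p q : Prop) [Decidable p] [Decidable q] :
    decide (p ∧ q) = (decide p && decide q) := by
  by_cases hp : p <;> by_cases hq : q <;> simp [hp, hq]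

lemma carry_succ (m x : ℕ) :
    decide (m % 2 ^ (x+1) = 2 ^ (x+1) - 1)
      = (decide (m % 2 ^ x = 2 ^ x - 1) && Nat.testBit m x) := by
  have hiff : (m % 2 ^ (x+1) = 2 ^ (x+1) - 1) ↔
      (m % 2 ^ x = 2 ^ x - 1 ∧ m / 2 ^ x % 2 = 1) := by
    have hp : 0 < 2 ^ x := Nat.pow_pos (by norm_num)
    have h1 : m % 2 ^ (x+1) = m % 2 ^ x + 2 ^ x * (m / 2 ^ x % 2) := by
      rw [pow_succ, Nat.mod_mul]
    have h2 : m % 2 ^ x < 2 ^ x := Nat.mod_lt _ hp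
    have h4 : 2 ^ (x+1) = 2 ^ x * 2 := pow_succ 2 x
    rcases Nat.mod_two_eq_zero_or_one (m / 2 ^ x) with h | h <;>
      rw [h] at h1 <;> simp only [Nat.mul_zero, Nat.mul_one] at h1 <;> omega
  rw [decide_eq_decide.mpr hiff, my_decide_and, Nat.testBit_eq_decide_div_mod_eq]

lemma testBit_add_one' (m x : ℕ) :
    Nat.testBit (m + 1) x
      = xor (decide (m % 2 ^ x = 2 ^ x - 1)) (Nat.testBit m x) := by
  have hp : 0 < 2 ^ x := Nat.pow_pos (by norm_num)
  have hm := Nat.div_add_mod m (2 ^ x)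
  have hr : m % 2 ^ x < 2 ^ x := Nat.mod_lt _ hp
  rw [Nat.testBit_eq_decide_div_mod_eq, Nat.testBit_eq_decide_div_mod_eq]
  by_cases hc : m % 2 ^ x = 2 ^ x - 1
  · have hh : 2 ^ x * (m / 2 ^ x + 1) = 2 ^ x * (m / 2 ^ x) + 2 ^ x := by ring
    have h1 : m + 1 = 2 ^ x * (m / 2 ^ x + 1) := by omega
    have h2 : (m + 1) / 2 ^ x = m / 2 ^ x + 1 := by
      rw [h1, Nat.mul_div_cancel_left _ hp]
    rw [h2, hc]
    simp only [decide_eq_true_eq, decide_true, Bool.true_xor]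
    rcases Nat.mod_two_eq_zero_or_one (m / 2 ^ x) with h | h <;>
      simp [Nat.add_mod, h]
  · have h1 : m + 1 = 2 ^ x * (m / 2 ^ x) + (m % 2 ^ x + 1) := by omega
    have h2 : (m + 1) / 2 ^ x = m / 2 ^ x := by
      have h3 : (m % 2 ^ x + 1) / 2 ^ x = 0 := Nat.div_eq_of_lt (by omega)
      rw [h1, Nat.mul_add_div hp, h3, Nat.add_zero]
    rw [h2, decide_eq_false hc, Bool.false_xor]

/-- The carry entering column `x` in row `y`. -/
def Abit (w x y : ℕ) : Bool := decide ((y % 2 ^ w) % 2 ^ x = 2 ^ x - 1)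

/-- The south input bit of column `x` in row `y`. -/
def Sbit (w x y : ℕ) : Bool := Nat.testBit (y % 2 ^ w) x

/-- The tile placed at position `(x, y)`. -/
def ctile (w x y : ℕ) : Tile := halfAdderTile (Abit w x y) (Sbit w x y)

lemma Abit_zero (w y : ℕ) : Abit w 0 y = true := by
  simp [Abit, Nat.pow_zero, Nat.mod_one]

lemma Sbit_row_zero (w x : ℕ) : Sbit w x 0 = false := by
  simp [Sbit, Nat.zero_testBit]

lemma east_west (w x y : ℕ) :
    (Abit w x y && Sbit w x y) = Abit w (x+1) y :=
  (carry_succ (y % 2 ^ w) x).symm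

lemma north_eq (w x y : ℕ) (hx : x < w) :
    xor (Abit w x y) (Sbit w x y) = Nat.testBit ((y + 1) % 2 ^ w) x := by
  have hw1 : 1 < 2 ^ w := by
    have : 2 ^ 1 ≤ 2 ^ w := Nat.pow_le_pow_right (by norm_num) (by omega)
    omega
  unfold Abit Sbit
  rw [← testBit_add_one']
  have h1 : (y % 2 ^ w + 1) % 2 ^ w = (y + 1) % 2 ^ w := by
    conv_rhs => rw [Nat.add_mod]
    rw [Nat.mod_eq_of_lt hw1]
  have h2 : Nat.testBit ((y % 2 ^ w + 1) % 2 ^ w) x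
      = Nat.testBit (y % 2 ^ w + 1) x := by
    rw [Nat.testBit_mod_two_pow]
    simp [hx]
  rw [← h2, h1]

lemma Sbit_row_succ (w x y : ℕ) (hx : x < w) :
    Sbit w x (y + 1) = xor (Abit w x y) (Sbit w x y) :=
  (north_eq w x y hx).symm

lemma ctile_mem (w x y : ℕ) : ctile w x y ∈ halfAdderSet := by
  unfold ctile
  cases Abit w x y <;> cases Sbit w x y <;> decide

lemma boolGlue_testBit (n x : ℕ) :
    boolGlue (Nat.testBit n x) = n / 2 ^ x % 2 := by
  rw [Nat.testBit_eq_decide_div_mod_eq]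
  rcases Nat.mod_two_eq_zero_or_one (n / 2 ^ x) with h | h <;> simp [h, boolGlue]

/-- A tile used only in the seed. -/
def seedTile : Tile := ⟨0, 0, 0, 1, 7⟩

/-- The L-shaped seed. -/
def mySeed (w h : ℕ) : Assembly := fun p =>
  if p = (-1, -1) ∨ (0 ≤ p.1 ∧ p.1 < (w : ℤ) ∧ p.2 = -1) ∨
      (p.1 = -1 ∧ 0 ≤ p.2 ∧ p.2 < (h : ℤ)) then some seedTile else none

lemma mySeed_eq_some {w h : ℕ} {p : ℤ × ℤ} {t : Tile}
    (hp : mySeed w h p = some t) : t = seedTile := by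
  unfold mySeed at hp
  split at hp
  · exact (Option.some.inj hp).symm
  · exact absurd hp (by simp)

lemma mySeed_none {w h : ℕ} {p : ℤ × ℤ} (h1 : 0 ≤ p.1) (h2 : 0 ≤ p.2) :
    mySeed w h p = none := by
  unfold mySeed
  rw [if_neg]
  rintro (hq | ⟨_, _, h3⟩ | ⟨h3, _, _⟩)
  · rw [hq] at h2; norm_num at h2
  · omega
  · omega

/-- The binary-counter RTAS. -/
def counterRTAS (w h : ℕ) : RTAS where
  T := halfAdderSet
  w := w
  h := h
  seed := mySeed w h
  seed_dom := by
    intro p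
    unfold mySeed
    split <;> simp_all
  seed_disjoint := by
    intro p t hp
    rw [mySeed_eq_some hp]
    decide

/-- The partial assembly containing the seed and the first `k` tiles in
row-major order. -/
def partialA (w h k : ℕ) : Assembly := fun p =>
  if 0 ≤ p.1 ∧ p.1 < (w : ℤ) ∧ 0 ≤ p.2 ∧ p.1.toNat + w * p.2.toNat < k
  then some (ctile w p.1.toNat p.2.toNat) else mySeed w h p

lemma partialA_zero (w h : ℕ) : partialA w h 0 = mySeed w h := by
  funext p
  unfold partialA
  rw [if_neg]
  rintro ⟨_, _, _, hlt⟩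
  omega

lemma partialA_nat (w h k x y : ℕ) (hx : x < w) :
    partialA w h k ((x : ℤ), (y : ℤ))
      = if x + w * y < k then some (ctile w x y) else none := by
  unfold partialA
  simp only [Int.toNat_natCast]
  by_cases hlt : x + w * y < k
  · rw [if_pos ⟨Int.natCast_nonneg x, by exact_mod_cast hx, Int.natCast_nonneg y, hlt⟩,
      if_pos hlt]
  · rw [if_neg (by rintro ⟨_, _, _, hc⟩; exact hlt hc), if_neg hlt]
    exact mySeed_none (Int.natCast_nonneg x) (Int.natCast_nonneg y)

lemma partialA_left (w h k : ℕ) (y : ℕ) (hy : y < h) :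
    partialA w h k (-1, (y : ℤ)) = some seedTile := by
  unfold partialA
  rw [if_neg (by rintro ⟨hc, _⟩; norm_num at hc)]
  unfold mySeed
  rw [if_pos (Or.inr (Or.inr ⟨rfl, by show (0:ℤ) ≤ (y:ℤ); omega, by show (y:ℤ) < (h:ℤ); exact_mod_cast hy⟩))]

lemma partialA_bottom (w h k : ℕ) (x : ℕ) (hx : x < w) :
    partialA w h k ((x : ℤ), -1) = some seedTile := by
  unfold partialA
  rw [if_neg (by rintro ⟨_, _, hc, _⟩; norm_num at hc)]
  unfold mySeed
  rw [if_pos (Or.inr (Or.inl ⟨by show (0:ℤ) ≤ (x:ℤ); omega, by show (x:ℤ) < (w:ℤ); exact_mod_cast hx, rfl⟩))]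

lemma step_lemma (w h k : ℕ) (hw : 1 ≤ w) (hk : k < w * h) :
    Step halfAdderSet (partialA w h k) (partialA w h (k + 1)) := by
  set x := k % w with hxdef
  set y := k / w with hydef
  have hk0 : x + w * y = k := Nat.mod_add_div k w
  have hxw : x < w := Nat.mod_lt _ (by omega)
  have hyh : y < h := by
    have h1 : w * y ≤ k := by rw [← hk0]; exact Nat.le_add_left _ _
    exact Nat.lt_of_mul_lt_mul_left (a := w) (lt_of_le_of_lt h1 hk)
  refine ⟨ctile w x y, (x : ℤ), (y : ℤ), ⟨ctile_mem w x y, ?_, ?_, ?_⟩, ?_⟩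
  · rw [partialA_nat w h k x y hxw, if_neg (by omega)]
  · -- west neighbour
    rcases Nat.eq_zero_or_pos x with hx0 | hx0
    · refine ⟨seedTile, ?_, ?_⟩
      · rw [hx0]; norm_num
        exact partialA_left w h k y hyh
      · show boolGlue (Abit w x y) = 1
        rw [hx0, Abit_zero]; rfl
    · refine ⟨ctile w (x - 1) y, ?_, ?_⟩
      · have hcast : (x : ℤ) - 1 = ((x - 1 : ℕ) : ℤ) := by omega
        rw [hcast, partialA_nat w h k (x - 1) y (by omega), if_pos ?_]
        obtain ⟨N, hN⟩ : ∃ N, w * y = N := ⟨_, rfl⟩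
        rw [hN] at hk0 ⊢
        omega
      · show boolGlue (Abit w x y) = boolGlue (Abit w (x-1) y && Sbit w (x-1) y)
        rw [east_west, Nat.sub_add_cancel hx0]
  · -- south neighbour
    rcases Nat.eq_zero_or_pos y with hy0 | hy0
    · refine ⟨seedTile, ?_, ?_⟩
      · rw [hy0]; norm_num
        exact partialA_bottom w h k x hxw
      · show boolGlue (Sbit w x y) = 0
        rw [hy0, Sbit_row_zero]; rfl
    · refine ⟨ctile w x (y - 1), ?_, ?_⟩
      · have hcast : (y : ℤ) - 1 = ((y - 1 : ℕ) : ℤ) := by omega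
        rw [hcast, partialA_nat w h k x (y - 1) hxw, if_pos ?_]
        have hmul : w * y = w * (y - 1) + w := by
          conv_lhs => rw [show y = (y - 1) + 1 by omega]
          ring
        obtain ⟨N, hN⟩ : ∃ N, w * (y - 1) = N := ⟨_, rfl⟩
        rw [hmul, hN] at hk0
        rw [hN]
        omega
      · show boolGlue (Sbit w x y) = boolGlue (xor (Abit w x (y-1)) (Sbit w x (y-1)))
        rw [← Sbit_row_succ w x (y - 1) hxw, Nat.sub_add_cancel hy0]
  · -- the resulting assembly
    funext p
    unfold Attach
    by_cases hp : p = ((x : ℤ), (y : ℤ))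
    · rw [if_pos hp, hp, partialA_nat w h (k + 1) x y hxw, if_pos (by omega)]
    · rw [if_neg hp]
      unfold partialA
      by_cases hc : 0 ≤ p.1 ∧ p.1 < (w : ℤ) ∧ 0 ≤ p.2 ∧
          p.1.toNat + w * p.2.toNat < k
      · rw [if_pos hc, if_pos ⟨hc.1, hc.2.1, hc.2.2.1, by omega⟩]
      · rw [if_neg hc, if_neg ?_]
        rintro ⟨h1, h2, h3, h4⟩
        have h5 : p.1.toNat + w * p.2.toNat = k := by
          by_contra h6
          exact hc ⟨h1, h2, h3, by omega⟩
        have h7 : p.1.toNat < w := by omega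
        have h8 := (Nat.div_mod_unique (show 0 < w by omega)).mpr
          ⟨h5, h7⟩
        have h9 : p.1.toNat = x := by rw [← h8.2]
        have h10 : p.2.toNat = y := by rw [← h8.1]
        apply hp
        have e1 : p.1 = (x : ℤ) := by rw [← h9, Int.toNat_of_nonneg h1]
        have e2 : p.2 = (y : ℤ) := by rw [← h10, Int.toNat_of_nonneg h3]
        exact Prod.ext e1 e2

lemma prod_partial (w h : ℕ) (hw : 1 ≤ w) :
    ∀ k, k ≤ w * h → Producible (counterRTAS w h) (partialA w h k) := by
  intro k
  induction k with
  | zero => intro _; rw [partialA_zero]; exact Producible.seed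
  | succ k ih =>
    intro hk
    exact Producible.step (ih (by omega)) (step_lemma w h k hw (by omega))

/-- The completed assembly. -/
def fullA (w h : ℕ) : Assembly := partialA w h (w * h)

/-- Scalar description of the domain of the terminal assembly. -/
def InDom (w h : ℕ) (x y : ℤ) : Prop :=
  (0 ≤ x ∧ x < w ∧ 0 ≤ y ∧ y < h) ∨ (x = -1 ∧ y = -1) ∨
    (0 ≤ x ∧ x < w ∧ y = -1) ∨ (x = -1 ∧ 0 ≤ y ∧ y < h)

lemma fullA_isSome_iff (w h : ℕ) (hw : 1 ≤ w) (x y : ℤ) :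
    (fullA w h (x, y)).isSome ↔ InDom w h x y := by
  unfold fullA partialA InDom
  by_cases hc : 0 ≤ x ∧ x < (w : ℤ) ∧ 0 ≤ y ∧
      (x, y).1.toNat + w * (x, y).2.toNat < w * h
  · rw [if_pos hc]
    simp only [Option.isSome_some, true_iff]
    left
    obtain ⟨h1, h2, h3, h4⟩ := hc
    refine ⟨h1, h2, h3, ?_⟩
    have h5 : y.toNat < h := by
      refine Nat.lt_of_mul_lt_mul_left (a := w) (lt_of_le_of_lt ?_ h4)
      exact Nat.le_add_left _ _
    omega
  · rw [if_neg hc]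
    unfold mySeed
    by_cases hs : (x, y) = ((-1 : ℤ), (-1 : ℤ)) ∨
        (0 ≤ (x, y).1 ∧ (x, y).1 < (w : ℤ) ∧ (x, y).2 = -1) ∨
        ((x, y).1 = -1 ∧ 0 ≤ (x, y).2 ∧ (x, y).2 < (h : ℤ))
    · rw [if_pos hs]
      simp only [Option.isSome_some, true_iff]
      rcases hs with hq | hq | hq
      · right; left; exact ⟨congrArg Prod.fst hq, congrArg Prod.snd hq⟩
      · right; right; left; exact hq
      · right; right; right; exact hq
    · rw [if_neg hs]
      simp only [Option.isSome_none, Bool.false_eq_true, false_iff]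
      rintro (⟨h1, h2, h3, h4⟩ | hq | hq | hq)
      · apply hc
        refine ⟨h1, h2, h3, ?_⟩
        have hxw : x.toNat < w := by omega
        have hyh : y.toNat < h := by omega
        calc x.toNat + w * y.toNat < w + w * y.toNat := by omega
          _ = w * (y.toNat + 1) := by ring
          _ ≤ w * h := Nat.mul_le_mul_left w (by omega)
      · exact hs (Or.inl (by simp only [Prod.mk.injEq]; exact hq))
      · exact hs (Or.inr (Or.inl hq))
      · exact hs (Or.inr (Or.inr hq))

lemma fullA_terminal (w h : ℕ) (hw : 1 ≤ w) (hh : 1 ≤ h) :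
    ∀ β : Assembly, ¬ Step halfAdderSet (fullA w h) β := by
  rintro β ⟨t, x, y, ⟨_, hnone, ⟨tw, hwest, _⟩, ⟨ts, hsouth, _⟩⟩, _⟩
  have h1 : ¬ InDom w h x y := by
    rw [← fullA_isSome_iff w h hw]
    rw [hnone]
    simp
  have h2 : InDom w h (x - 1) y := by
    rw [← fullA_isSome_iff w h hw, hwest]; simp
  have h3 : InDom w h x (y - 1) := by
    rw [← fullA_isSome_iff w h hw, hsouth]; simp
  have hw' : (1 : ℤ) ≤ (w : ℤ) := by exact_mod_cast hw
  have hh' : (1 : ℤ) ≤ (h : ℤ) := by exact_mod_cast hh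
  unfold InDom at h1 h2 h3
  omega

lemma fullA_nat (w h : ℕ) (hw : 1 ≤ w) (x y : ℕ) (hx : x < w) (hy : y < h) :
    fullA w h ((x : ℤ), (y : ℤ)) = some (ctile w x y) := by
  unfold fullA
  rw [partialA_nat w h (w * h) x y hx, if_pos]
  calc x + w * y < w + w * y := by omega
    _ = w * (y + 1) := by ring
    _ ≤ w * h := Nat.mul_le_mul_left w (by omega)

/-- The four half-adder tile types form a directed tile set
of exactly 4 tile types using only 2 colours, and for all `w, h ≥ 1` there is
an L-shaped seed — with all south seed glues `0` and all west seed glues `1` —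
for which the resulting directed RTAS uniquely self-assembles the `w × h`
binary counter pattern `P x y = ((y + 1) % 2 ^ w) / 2 ^ x % 2` (the `x`-th
least-significant binary digit of `(y + 1) mod 2 ^ w`). -/
theorem binary_counter_selfassembly :
    halfAdderSet.card = 4 ∧ DirectedTS halfAdderSet ∧
    (halfAdderSet.image Tile.color).card = 2 ∧
    ∀ w h : ℕ, 1 ≤ w → 1 ≤ h →
      ∃ S : RTAS, S.T = halfAdderSet ∧ S.w = w ∧ S.h = h ∧
        (∀ (x : ℤ) (t : Tile), S.seed (x, -1) = some t → t.north = 0) ∧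
        (∀ (y : ℤ) (t : Tile), S.seed (-1, y) = some t → t.east = 1) ∧
        UniquelySelfAssembles S w h (fun x y => ((y + 1) % 2 ^ w) / 2 ^ x % 2) := by
  refine ⟨by decide, by unfold DirectedTS; decide, by decide, ?_⟩
  intro w h hw hh
  refine ⟨counterRTAS w h, rfl, rfl, rfl, ?_, ?_, ?_⟩
  · intro x t ht
    rw [mySeed_eq_some ht]
    rfl
  · intro y t ht
    rw [mySeed_eq_some ht]
    rfl
  · refine ⟨fullA w h, ⟨prod_partial w h hw (w * h) le_rfl,
      fullA_terminal w h hw hh⟩, ?_, ?_⟩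
    · intro x y
      rw [fullA_isSome_iff w h hw]
      unfold InDom
      constructor
      · rintro (⟨h1, h2, h3, h4⟩ | ⟨h1, h2⟩ | ⟨h1, h2, h3⟩ | ⟨h1, h2, h3⟩) <;>
          constructor <;> omega
      · rintro ⟨hx, hy⟩
        exact Or.inl ⟨by omega, by omega, by omega, by omega⟩
    · intro x y t ht
      have hsome : (fullA w h ((x : ℤ), (y : ℤ))).isSome := by rw [ht]; simp
      rw [fullA_isSome_iff w h hw] at hsome
      unfold InDom at hsome
      have hxy : x < w ∧ y < h := by
        rcases hsome with ⟨h1, h2, h3, h4⟩ | ⟨h1, h2⟩ | ⟨h1, h2, h3⟩ |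
          ⟨h1, h2, h3⟩ <;> constructor <;> omega
      rw [fullA_nat w h hw x y hxy.1 hxy.2] at ht
      rw [← Option.some.inj ht]
      show boolGlue (xor (Abit w x y) (Sbit w x y)) = _
      rw [north_eq w x y hxy.1, boolGlue_testBit]
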